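/- Let c₁, c₂, c₃ be pairwise distinct oriented circles with discriminant D = Q(c₁ − c₂) · Q(c₁ − c₃) · Q(c₂ − c₃) = 0, and suppose it is not the case that Q(c₁ − c₂) = 0, Q(c₁ − c₃) = 0 and Q(c₂ − c₃) = 0 all hold (the three circles are not pairwise orientedly tangent). Then the oriented Apollonius problem for (c₁, c₂, c₃) has exactly 1 solution. -/

import Mathlib

open RealInnerProductSpace

noncomputable section

/-- The Euclidean plane. -/
abbrev Pl := EuclideanSpace ℝ (Fin 2)

/-- The Lorentz quadratic form `Q(x, r) = ‖x‖² − r²` on the space of oriented circles. -/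
def Q (c : Pl × ℝ) : ℝ := ‖c.1‖ ^ 2 - c.2 ^ 2

/-- Solutions of the oriented Apollonius problem for the oriented circles `c₁, c₂, c₃`:
either an oriented circle `d` with `Q(d − cᵢ) = 0` for all `i`, or an oriented line
`(u, t)` (with `‖u‖ = 1`, representing `{p : ⟪u, p⟫ = t}`) tangent to every `cᵢ`,
i.e. `⟪u, xᵢ⟫ − t = rᵢ` for all `i`. The solution set is the disjoint union of the two. -/
def OrientedApolloniusSolutions (c₁ c₂ c₃ : Pl × ℝ) : Type :=
  {d : Pl × ℝ // Q (d - c₁) = 0 ∧ Q (d - c₂) = 0 ∧ Q (d - c₃) = 0} ⊕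
  {l : Pl × ℝ // ‖l.1‖ = 1 ∧ ⟪l.1, c₁.1⟫ - l.2 = c₁.2 ∧ ⟪l.1, c₂.1⟫ - l.2 = c₂.2 ∧
    ⟪l.1, c₃.1⟫ - l.2 = c₃.2}

def B (v w : Pl × ℝ) : ℝ := ⟪v.1, w.1⟫ - v.2 * w.2

lemma Q_zero : Q (0 : Pl × ℝ) = 0 := by simp [Q]

lemma Q_neg (v : Pl × ℝ) : Q (-v) = Q v := by simp [Q]

lemma B_comm (v w : Pl × ℝ) : B v w = B w v := by
  simp [B, real_inner_comm]; ring

lemma B_smul_smul (r s : ℝ) (v w : Pl × ℝ) : B (r • v) (s • w) = r * s * B v w := by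
  simp [B, real_inner_smul_left, real_inner_smul_right]; ring

lemma Q_sub' (v w : Pl × ℝ) : Q (v - w) = Q v - 2 * B v w + Q w := by
  simp only [Q, B, Prod.fst_sub, Prod.snd_sub, norm_sub_sq_real]
  ring

lemma Q_add' (v w : Pl × ℝ) : Q (v + w) = Q v + 2 * B v w + Q w := by
  simp only [Q, B, Prod.fst_add, Prod.snd_add, norm_add_sq_real]
  ring

lemma Q_smul (r : ℝ) (v : Pl × ℝ) : Q (r • v) = r ^ 2 * Q v := by
  simp only [Q, Prod.smul_fst, Prod.smul_snd, norm_smul, mul_pow, smul_eq_mul,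
    Real.norm_eq_abs, sq_abs]
  ring

lemma null_snd {u : Pl × ℝ} (h : Q u = 0) (h2 : u.2 = 0) : u = 0 := by
  have : ‖u.1‖ ^ 2 = 0 := by simp [Q, h2] at h; simpa using h
  have h1 : u.1 = 0 := by
    have := pow_eq_zero_iff (n := 2) (by norm_num) |>.mp this
    simpa using this
  exact Prod.ext h1 h2

lemma null_dep {u w : Pl × ℝ} (hu : Q u = 0) (hw : Q w = 0) (hB : B u w = 0) :
    u.2 • w = w.2 • u := by
  have h1 : ‖u.1‖ ^ 2 = u.2 ^ 2 := by simpa [Q, sub_eq_zero] using hu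
  have h2 : ‖w.1‖ ^ 2 = w.2 ^ 2 := by simpa [Q, sub_eq_zero] using hw
  have h3 : ⟪u.1, w.1⟫ = u.2 * w.2 := by simpa [B, sub_eq_zero] using hB
  have key : ‖u.2 • w.1 - w.2 • u.1‖ ^ 2 = 0 := by
    rw [norm_sub_sq_real, norm_smul, norm_smul, real_inner_smul_left, real_inner_smul_right]
    simp only [Real.norm_eq_abs, mul_pow, sq_abs]
    rw [real_inner_comm, h3]
    nlinarith [h1, h2]
  have : u.2 • w.1 - w.2 • u.1 = 0 := by
    have := pow_eq_zero_iff (n := 2) (by norm_num) |>.mp key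
    simpa using this
  refine Prod.ext ?_ (by simp [mul_comm])
  simpa [sub_eq_zero] using this

lemma B_self (v : Pl × ℝ) : B v v = Q v := by
  rw [B, Q, real_inner_self_eq_norm_sq]; ring


/-- Any tangent line to a pair of tangent oriented circles has direction
determined by the circles. -/
lemma line_sol_dir {c₁ c₂ : Pl × ℝ} (h12 : c₁ ≠ c₂) (ha : Q (c₁ - c₂) = 0)
    {u : Pl} {t : ℝ} (hu : ‖u‖ = 1)
    (h1 : ⟪u, c₁.1⟫ - t = c₁.2) (h2 : ⟪u, c₂.1⟫ - t = c₂.2) :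
    c₁.2 - c₂.2 ≠ 0 ∧ c₁.1 - c₂.1 = (c₁.2 - c₂.2) • u := by
  have hQ : ‖c₁.1 - c₂.1‖ ^ 2 = (c₁.2 - c₂.2) ^ 2 := by
    have := ha
    simp only [Q, Prod.fst_sub, Prod.snd_sub, sub_eq_zero] at this
    exact this
  have hip : ⟪u, c₁.1 - c₂.1⟫ = c₁.2 - c₂.2 := by
    rw [inner_sub_right]; linarith [h1, h2]
  have hr : c₁.2 - c₂.2 ≠ 0 := by
    intro h0
    have : c₁.1 - c₂.1 = 0 := by
      have : ‖c₁.1 - c₂.1‖ ^ 2 = 0 := by rw [hQ, h0]; ring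
      have := pow_eq_zero_iff (n := 2) (by norm_num) |>.mp this
      simpa using this
    exact h12 (Prod.ext (by rwa [sub_eq_zero] at this) (by rwa [sub_eq_zero] at h0))
  refine ⟨hr, ?_⟩
  have key : ‖c₁.1 - c₂.1 - (c₁.2 - c₂.2) • u‖ ^ 2 = 0 := by
    rw [norm_sub_sq_real, norm_smul, real_inner_smul_right, real_inner_comm, hip]
    simp only [Real.norm_eq_abs, mul_pow, sq_abs, hu]
    nlinarith [hQ]
  have := pow_eq_zero_iff (n := 2) (by norm_num) |>.mp key
  rw [norm_eq_zero, sub_eq_zero] at this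
  exact this

/-- A common tangent line to three circles, two of which are tangent, forces `B = 0`. -/
lemma line_sol_B {c₁ c₂ c₃ : Pl × ℝ} (h12 : c₁ ≠ c₂) (ha : Q (c₁ - c₂) = 0)
    {u : Pl} {t : ℝ} (hu : ‖u‖ = 1)
    (h1 : ⟪u, c₁.1⟫ - t = c₁.2) (h2 : ⟪u, c₂.1⟫ - t = c₂.2)
    (h3 : ⟪u, c₃.1⟫ - t = c₃.2) :
    B (c₁ - c₂) (c₁ - c₃) = 0 := by
  obtain ⟨hr, hdir⟩ := line_sol_dir h12 ha hu h1 h2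
  have hip : ⟪u, c₁.1 - c₃.1⟫ = c₁.2 - c₃.2 := by
    rw [inner_sub_right]; linarith [h1, h3]
  simp only [B, Prod.fst_sub, Prod.snd_sub, hdir, real_inner_smul_left]
  rw [hip]; ring

/-- Any solution circle, when the pair `(c₁, c₂)` is tangent and the others are not,
lies on the line through `c₁` in direction `c₁ - c₂`. -/
lemma circle_sol_form {c₁ c₂ c₃ : Pl × ℝ} (h12 : c₁ ≠ c₂)
    (ha : Q (c₁ - c₂) = 0) (hb : Q (c₁ - c₃) ≠ 0) (hc : Q (c₂ - c₃) ≠ 0)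
    {d : Pl × ℝ} (h1 : Q (d - c₁) = 0) (h2 : Q (d - c₂) = 0) (h3 : Q (d - c₃) = 0) :
    ∃ μ : ℝ, d = c₁ + μ • (c₁ - c₂) ∧
      Q (c₁ - c₃) + 2 * μ * B (c₁ - c₂) (c₁ - c₃) = 0 := by
  set u := d - c₁ with hu_def
  set w := d - c₂ with hw_def
  have huw : u - w = c₂ - c₁ := by rw [hu_def, hw_def]; abel
  have hBuw : B u w = 0 := by
    have := Q_sub' u w
    rw [huw, show c₂ - c₁ = -(c₁ - c₂) by abel, Q_neg, ha, h1, h2] at this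
    linarith
  have hu0 : u ≠ 0 := by
    intro h
    apply hb
    have : d = c₁ := by rwa [hu_def, sub_eq_zero] at h
    rwa [this] at h3
  have hw0 : w ≠ 0 := by
    intro h
    apply hc
    have : d = c₂ := by rwa [hw_def, sub_eq_zero] at h
    rwa [this] at h3
  have hu2 : u.2 ≠ 0 := fun h => hu0 (null_snd h1 h)
  have hw2 : w.2 ≠ 0 := fun h => hw0 (null_snd h2 h)
  have hdep : u.2 • w = w.2 • u := null_dep h1 h2 hBuw
  -- c₁ - c₂ = w - u = ((w.2 - u.2)/u.2) • u
  have hv : c₁ - c₂ = ((w.2 - u.2) / u.2) • u := by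
    have : w = (w.2 / u.2) • u := by
      have := congrArg (fun x => (u.2)⁻¹ • x) hdep
      simpa [smul_smul, inv_mul_cancel₀ hu2, div_eq_inv_mul, mul_comm] using this
    calc c₁ - c₂ = w - u := by rw [hu_def, hw_def]; abel
    _ = (w.2 / u.2) • u - u := by rw [← this]
    _ = ((w.2 - u.2) / u.2) • u := by
        rw [sub_div, div_self hu2, sub_smul, one_smul]
  set k := (w.2 - u.2) / u.2 with hk_def
  have hk0 : k ≠ 0 := by
    intro h
    apply h12
    rw [← sub_eq_zero, hv, h, zero_smul]
  have huv : u = k⁻¹ • (c₁ - c₂) := by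
    rw [hv, smul_smul, inv_mul_cancel₀ hk0, one_smul]
  refine ⟨k⁻¹, ?_, ?_⟩
  · rw [← huv, hu_def]; abel
  · have hd3 : d - c₃ = (c₁ - c₃) + k⁻¹ • (c₁ - c₂) := by
      rw [← huv, hu_def]; abel
    have := Q_add' (c₁ - c₃) (k⁻¹ • (c₁ - c₂))
    rw [← hd3, h3] at this
    rw [show B (c₁ - c₃) (k⁻¹ • (c₁ - c₂)) =
        k⁻¹ * B (c₁ - c₂) (c₁ - c₃) by
      rw [B_comm]
      simpa using B_smul_smul k⁻¹ 1 (c₁ - c₂) (c₁ - c₃)] at this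
    rw [Q_smul, ha] at this
    linarith

/-- Case: exactly the pair `(c₁, c₂)` is tangent. -/
lemma card_one_zero {c₁ c₂ c₃ : Pl × ℝ} (h12 : c₁ ≠ c₂)
    (ha : Q (c₁ - c₂) = 0) (hb : Q (c₁ - c₃) ≠ 0) (hc : Q (c₂ - c₃) ≠ 0) :
    Nat.card (OrientedApolloniusSolutions c₁ c₂ c₃) = 1 := by
  rw [Nat.card_eq_one_iff_exists]
  by_cases he : B (c₁ - c₂) (c₁ - c₃) = 0
  · -- no circle solution; unique line solution
    have hQ : ‖c₁.1 - c₂.1‖ ^ 2 = (c₁.2 - c₂.2) ^ 2 := by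
      have := ha; simp only [Q, Prod.fst_sub, Prod.snd_sub, sub_eq_zero] at this
      exact this
    have hr : c₁.2 - c₂.2 ≠ 0 := by
      intro h0
      apply h12
      have hx : c₁.1 - c₂.1 = 0 := by
        have h2 : ‖c₁.1 - c₂.1‖ ^ 2 = 0 := by rw [hQ, h0]; ring
        have := pow_eq_zero_iff (n := 2) (by norm_num) |>.mp h2
        simpa using this
      rw [sub_eq_zero] at hx
      rw [sub_eq_zero] at h0
      exact Prod.ext hx h0
    set u₀ : Pl := (c₁.2 - c₂.2)⁻¹ • (c₁.1 - c₂.1) with hu₀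
    have hnx : ‖c₁.1 - c₂.1‖ = |c₁.2 - c₂.2| := by
      nlinarith [norm_nonneg (c₁.1 - c₂.1), abs_nonneg (c₁.2 - c₂.2),
        sq_abs (c₁.2 - c₂.2)]
    have hnorm : ‖u₀‖ = 1 := by
      rw [hu₀, norm_smul, Real.norm_eq_abs, hnx, abs_inv,
        inv_mul_cancel₀ (abs_ne_zero.mpr hr)]
    have hip12 : ⟪u₀, c₁.1 - c₂.1⟫ = c₁.2 - c₂.2 := by
      rw [hu₀, real_inner_smul_left, real_inner_self_eq_norm_sq, hQ]
      field_simp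
    have hip13 : ⟪u₀, c₁.1 - c₃.1⟫ = c₁.2 - c₃.2 := by
      have hB : ⟪c₁.1 - c₂.1, c₁.1 - c₃.1⟫ = (c₁.2 - c₂.2) * (c₁.2 - c₃.2) := by
        have := he
        simp only [B, Prod.fst_sub, Prod.snd_sub, sub_eq_zero] at this
        exact this
      rw [hu₀, real_inner_smul_left, hB]
      field_simp
    set t₀ : ℝ := ⟪u₀, c₁.1⟫ - c₁.2 with ht₀
    have hl1 : ⟪u₀, c₁.1⟫ - t₀ = c₁.2 := by rw [ht₀]; ring
    have hl2 : ⟪u₀, c₂.1⟫ - t₀ = c₂.2 := by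
      rw [inner_sub_right] at hip12
      rw [ht₀]; linarith
    have hl3 : ⟪u₀, c₃.1⟫ - t₀ = c₃.2 := by
      rw [inner_sub_right] at hip13
      rw [ht₀]; linarith
    refine ⟨Sum.inr ⟨(u₀, t₀), hnorm, hl1, hl2, hl3⟩, ?_⟩
    rintro (⟨d, hd1, hd2, hd3⟩ | ⟨l, hn, p1, p2, p3⟩)
    · obtain ⟨μ, _, hμ⟩ := circle_sol_form h12 ha hb hc hd1 hd2 hd3
      rw [he] at hμ
      exact absurd (by linarith) hb
    · obtain ⟨hr', hdir⟩ := line_sol_dir h12 ha hn p1 p2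
      have hu : l.1 = u₀ := by
        rw [hu₀, hdir, smul_smul, inv_mul_cancel₀ hr', one_smul]
      have ht : l.2 = t₀ := by rw [ht₀, ← hu]; linarith
      congr 1
      exact Subtype.ext (Prod.ext hu ht)
  · -- unique circle solution
    set e := B (c₁ - c₂) (c₁ - c₃) with he_def
    set μ₀ : ℝ := -Q (c₁ - c₃) / (2 * e) with hμ₀
    set d₀ : Pl × ℝ := c₁ + μ₀ • (c₁ - c₂) with hd₀
    have hd1 : Q (d₀ - c₁) = 0 := by
      have : d₀ - c₁ = μ₀ • (c₁ - c₂) := by rw [hd₀]; abel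
      rw [this, Q_smul, ha, mul_zero]
    have hd2 : Q (d₀ - c₂) = 0 := by
      have : d₀ - c₂ = (1 + μ₀) • (c₁ - c₂) := by rw [hd₀]; module
      rw [this, Q_smul, ha, mul_zero]
    have hd3 : Q (d₀ - c₃) = 0 := by
      have h : d₀ - c₃ = (c₁ - c₃) + μ₀ • (c₁ - c₂) := by rw [hd₀]; abel
      rw [h, Q_add', Q_smul, ha, mul_zero, add_zero]
      have hBs : B (c₁ - c₃) (μ₀ • (c₁ - c₂)) = μ₀ * e := by
        rw [he_def, B_comm (c₁ - c₂) (c₁ - c₃)]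
        simpa using B_smul_smul 1 μ₀ (c₁ - c₃) (c₁ - c₂)
      rw [hBs, hμ₀]
      field_simp
      ring
    refine ⟨Sum.inl ⟨d₀, hd1, hd2, hd3⟩, ?_⟩
    rintro (⟨d, hc1, hc2, hc3⟩ | ⟨l, hn, p1, p2, p3⟩)
    · obtain ⟨μ, hdeq, hμ⟩ := circle_sol_form h12 ha hb hc hc1 hc2 hc3
      have : μ = μ₀ := by
        rw [hμ₀]
        field_simp
        linarith [hμ]
      have hdd : d = d₀ := by rw [hdeq, this]
      exact congrArg Sum.inl (Subtype.ext hdd)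
    · exact absurd (line_sol_B h12 ha hn p1 p2 p3) he

/-- Case: the pairs `(c₁, c₂)` and `(c₁, c₃)` are tangent, but not `(c₂, c₃)`. -/
lemma card_two_zero {c₁ c₂ c₃ : Pl × ℝ} (h12 : c₁ ≠ c₂) (h13 : c₁ ≠ c₃)
    (ha : Q (c₁ - c₂) = 0) (hb : Q (c₁ - c₃) = 0) (hc : Q (c₂ - c₃) ≠ 0) :
    Nat.card (OrientedApolloniusSolutions c₁ c₂ c₃) = 1 := by
  rw [Nat.card_eq_one_iff_exists]
  refine ⟨Sum.inl ⟨c₁, by simpa using Q_zero, ha, hb⟩, ?_⟩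
  rintro (⟨d, hd1, hd2, hd3⟩ | ⟨l, hn, p1, p2, p3⟩)
  · have hBuw : B (d - c₁) (d - c₂) = 0 := by
      have h := Q_sub' (d - c₁) (d - c₂)
      rw [show d - c₁ - (d - c₂) = -(c₁ - c₂) by abel, Q_neg, ha, hd1, hd2] at h
      linarith
    have hBuz : B (d - c₁) (d - c₃) = 0 := by
      have h := Q_sub' (d - c₁) (d - c₃)
      rw [show d - c₁ - (d - c₃) = -(c₁ - c₃) by abel, Q_neg, hb, hd1, hd3] at h
      linarith
    have hBwz : B (d - c₂) (d - c₃) ≠ 0 := by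
      have h := Q_sub' (d - c₂) (d - c₃)
      rw [show d - c₂ - (d - c₃) = -(c₂ - c₃) by abel, Q_neg, hd2, hd3] at h
      intro h0
      rw [h0] at h
      exact hc (by linarith)
    have hu0 : d - c₁ = 0 := by
      by_contra hne
      have hu2 : (d - c₁).2 ≠ 0 := fun h => hne (null_snd hd1 h)
      have hdep1 := null_dep hd1 hd2 hBuw
      have hdep2 := null_dep hd1 hd3 hBuz
      apply hBwz
      have key : (d - c₁).2 ^ 2 * B (d - c₂) (d - c₃) = 0 := by
        calc (d - c₁).2 ^ 2 * B (d - c₂) (d - c₃)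
            = B ((d - c₁).2 • (d - c₂)) ((d - c₁).2 • (d - c₃)) := by
              rw [B_smul_smul]; ring
          _ = B ((d - c₂).2 • (d - c₁)) ((d - c₃).2 • (d - c₁)) := by
              rw [hdep1, hdep2]
          _ = (d - c₂).2 * (d - c₃).2 * Q (d - c₁) := by
              rw [B_smul_smul, B_self]
          _ = 0 := by rw [hd1, mul_zero]
      have := mul_eq_zero.mp key
      rcases this with h | h
      · exact absurd (pow_eq_zero_iff (n := 2) (by norm_num) |>.mp h) hu2
      · exact h
    congr 1
    exact Subtype.ext (by rw [← sub_eq_zero]; exact hu0)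
  · obtain ⟨hr12, hdir12⟩ := line_sol_dir h12 ha hn p1 p2
    obtain ⟨hr13, hdir13⟩ := line_sol_dir h13 hb hn p1 p3
    exfalso
    apply hc
    have hx : c₂.1 - c₃.1 = (c₂.2 - c₃.2) • l.1 := by
      have : c₂.1 - c₃.1 = (c₁.1 - c₃.1) - (c₁.1 - c₂.1) := by abel
      rw [this, hdir12, hdir13, ← sub_smul]
      congr 1
      ring
    simp only [Q, Prod.fst_sub, Prod.snd_sub, hx, norm_smul, Real.norm_eq_abs,
      hn, mul_one, sq_abs, sub_self]

/-- Permutation invariance of the solution count: swapping `c₁, c₂`. -/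
lemma card_swap12 (c₁ c₂ c₃ : Pl × ℝ) :
    Nat.card (OrientedApolloniusSolutions c₁ c₂ c₃) =
      Nat.card (OrientedApolloniusSolutions c₂ c₁ c₃) :=
  Nat.card_congr <| Equiv.sumCongr
    (Equiv.subtypeEquivRight fun d => by tauto)
    (Equiv.subtypeEquivRight fun l => by tauto)

/-- Permutation invariance of the solution count: swapping `c₂, c₃`. -/
lemma card_swap23 (c₁ c₂ c₃ : Pl × ℝ) :
    Nat.card (OrientedApolloniusSolutions c₁ c₂ c₃) =
      Nat.card (OrientedApolloniusSolutions c₁ c₃ c₂) :=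
  Nat.card_congr <| Equiv.sumCongr
    (Equiv.subtypeEquivRight fun d => by tauto)
    (Equiv.subtypeEquivRight fun l => by tauto)

/-- If the three oriented circles are pairwise distinct, their discriminant vanishes,
but they are not pairwise orientedly tangent, then the oriented Apollonius problem has
exactly 1 solution. -/
theorem oriented_apollonius_one_solution (c₁ c₂ c₃ : Pl × ℝ)
    (h₁₂ : c₁ ≠ c₂) (h₁₃ : c₁ ≠ c₃) (h₂₃ : c₂ ≠ c₃)
    (hD : Q (c₁ - c₂) * Q (c₁ - c₃) * Q (c₂ - c₃) = 0)
    (hnt : ¬ (Q (c₁ - c₂) = 0 ∧ Q (c₁ - c₃) = 0 ∧ Q (c₂ - c₃) = 0)) :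
    Nat.card (OrientedApolloniusSolutions c₁ c₂ c₃) = 1 := by
  have sym12 : Q (c₂ - c₁) = Q (c₁ - c₂) := by rw [show c₂ - c₁ = -(c₁ - c₂) by abel, Q_neg]
  have sym13 : Q (c₃ - c₁) = Q (c₁ - c₃) := by rw [show c₃ - c₁ = -(c₁ - c₃) by abel, Q_neg]
  have sym23 : Q (c₃ - c₂) = Q (c₂ - c₃) := by rw [show c₃ - c₂ = -(c₂ - c₃) by abel, Q_neg]
  by_cases ha : Q (c₁ - c₂) = 0 <;> by_cases hb : Q (c₁ - c₃) = 0 <;>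
    by_cases hc : Q (c₂ - c₃) = 0
  · exact absurd ⟨ha, hb, hc⟩ hnt
  · exact card_two_zero h₁₂ h₁₃ ha hb hc
  · -- a=0, c=0, b≠0 : common circle c₂
    rw [card_swap12]
    exact card_two_zero h₁₂.symm h₂₃ (by rwa [sym12]) hc hb
  · exact card_one_zero h₁₂ ha hb hc
  · -- b=0, c=0, a≠0 : common circle c₃
    rw [card_swap23, card_swap12]
    exact card_two_zero h₁₃.symm h₂₃.symm (by rwa [sym13]) (by rwa [sym23]) ha
  · -- b=0 only
    rw [card_swap23]
    exact card_one_zero h₁₃ hb ha (by rwa [sym23])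
  · -- c=0 only
    rw [card_swap12, card_swap23]
    exact card_one_zero h₂₃ hc (by rwa [sym12]) (by rwa [sym13])
  · exact absurd hD (by simp [ha, hb, hc, mul_ne_zero])
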